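/- Let G be a simple graph on a finite vertex set V with |V| = n, and let r be a natural number. Suppose there exists a finite tree T in which every vertex has degree 1 or 3, whose leaves are in bijection with V, such that for every edge e of T, the biadjacency matrix over ℤ/2 of the bipartition of V induced by the two components of T − e has rank at most r. Then there exists a bipartition of V into sets A and B with |A| ≥ n/3 and |B| ≥ n/3 whose biadjacency matrix over ℤ/2 has rank at most r. -/

import Mathlib

open scoped Classical in
/-- The rank over `ℤ/2` of the biadjacency matrix of the bipartition `(A, B)` of the
vertex set of `G`: the `A × B` matrix whose `(a, b)` entry is `1` if `a` and `b` are
adjacent and `0` otherwise.  (It is encoded as a `V × V` matrix padded with zeros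
outside `A × B`, which has the same rank.) -/
noncomputable def biadjRank {V : Type*} [Fintype V] (G : SimpleGraph V)
    (A B : Set V) : ℕ :=
  (Matrix.of fun a b : V =>
    if a ∈ A ∧ b ∈ B ∧ G.Adj a b then (1 : ZMod 2) else 0).rank

namespace Stmt2Aux
open SimpleGraph

variable {W : Type} {T : SimpleGraph W}

lemma not_reach (hT : T.IsAcyclic) {a b : W} (hab : T.Adj a b) :
    ¬ (T.deleteEdges {s(a, b)}).Reachable a b := by
  have h := (isAcyclic_iff_forall_adj_isBridge.mp hT) hab
  rw [isBridge_iff] at h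
  exact h

lemma reach_dichotomy (hc : T.Connected) (a b w : W) :
    (T.deleteEdges {s(a, b)}).Reachable w a ∨ (T.deleteEdges {s(a, b)}).Reachable w b := by
  obtain ⟨p⟩ := hc w a
  have key : ∀ {u v : W} (_ : T.Walk u v),
      ((T.deleteEdges {s(a, b)}).Reachable v a ∨ (T.deleteEdges {s(a, b)}).Reachable v b) →
      ((T.deleteEdges {s(a, b)}).Reachable u a ∨ (T.deleteEdges {s(a, b)}).Reachable u b) := by
    intro u v p
    induction p with
    | nil => exact id
    | @cons u x v h q ih =>
      intro hv
      by_cases he : s(u, x) = s(a, b)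
      · rw [Sym2.eq_iff] at he
        rcases he with ⟨rfl, rfl⟩ | ⟨rfl, rfl⟩
        · exact Or.inl Reachable.rfl
        · exact Or.inr Reachable.rfl
      · have hadj : (T.deleteEdges {s(a, b)}).Adj u x := by
          rw [deleteEdges_adj]
          exact ⟨h, by simpa using he⟩
        rcases ih hv with h1 | h1
        · exact Or.inl (hadj.reachable.trans h1)
        · exact Or.inr (hadj.reachable.trans h1)
  exact key p (Or.inl Reachable.rfl)

lemma walk_avoids (hT : T.IsAcyclic) {c x z : W} (hcx : T.Adj c x)
    (p : (T.deleteEdges {s(c, x)}).Walk z c) : x ∉ p.support := by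
  classical
  intro hx
  exact not_reach hT hcx ((p.dropUntil x hx).reachable.symm)

lemma transfer_reach {x z u : W} {s : Set (Sym2 W)} (p : (T.deleteEdges s).Walk z u)
    (hx : x ∉ p.support) (y : W) :
    (T.deleteEdges {s(x, y)}).Reachable z u := by
  refine ⟨p.transfer _ ?_⟩
  intro e he
  have h1 := p.edges_subset_edgeSet he
  rw [edgeSet_deleteEdges] at h1
  rw [edgeSet_deleteEdges]
  refine ⟨h1.1, ?_⟩
  simp only [Set.mem_singleton_iff]
  rintro rfl
  exact hx (p.fst_mem_support_of_mem_edges he)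

lemma reach_sub (hT : T.IsAcyclic) {x y c z : W} (hxy : T.Adj x y) (hcx : T.Adj c x) (hcy : c ≠ y)
    (h : (T.deleteEdges {s(c, x)}).Reachable z c) :
    (T.deleteEdges {s(x, y)}).Reachable z x := by
  obtain ⟨p⟩ := h
  have hx : x ∉ p.support := walk_avoids hT hcx p
  have h1 : (T.deleteEdges {s(x, y)}).Reachable z c := transfer_reach p hx y
  have hadj : (T.deleteEdges {s(x, y)}).Adj c x := by
    rw [deleteEdges_adj]
    refine ⟨hcx, ?_⟩
    simp only [Set.mem_singleton_iff, Sym2.eq_iff]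
    rintro (⟨rfl, rfl⟩ | ⟨rfl, -⟩)
    · exact hcx.ne rfl
    · exact hcy rfl
  exact h1.trans hadj.reachable

lemma leaf_comp {x y z : W} (h1 : T.neighborSet x = {y})
    (h : (T.deleteEdges {s(x, y)}).Reachable z x) : z = x := by
  obtain ⟨p⟩ := h.symm
  cases p with
  | nil => rfl
  | @cons _ u _ h q =>
    exfalso
    rw [deleteEdges_adj] at h
    have hu : u ∈ T.neighborSet x := (mem_neighborSet _ _ _).mpr h.1
    rw [h1, Set.mem_singleton_iff] at hu
    subst hu
    exact h.2 rfl

lemma three_mem {S : Set W} {y : W} (h3 : S.ncard = 3) (hy : y ∈ S) :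
    ∃ c d, c ≠ d ∧ c ≠ y ∧ d ≠ y ∧ S = {y, c, d} := by
  obtain ⟨a, b, c, hab, hac, hbc, rfl⟩ := Set.ncard_eq_three.mp h3
  simp only [Set.mem_insert_iff, Set.mem_singleton_iff] at hy
  rcases hy with rfl | rfl | rfl
  · exact ⟨b, c, hbc, fun h => hab h.symm, fun h => hac h.symm, rfl⟩
  · exact ⟨a, c, hac, hab, fun h => hbc h.symm, by ext t; simp; tauto⟩
  · exact ⟨a, b, hab, hac, hbc, by ext t; simp; tauto⟩

lemma disj (hT : T.IsAcyclic) {c d x z : W} (hcx : T.Adj c x) (hdx : T.Adj d x) (hcd : c ≠ d)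
    (h1 : (T.deleteEdges {s(c, x)}).Reachable z c)
    (h2 : (T.deleteEdges {s(d, x)}).Reachable z d) : False := by
  obtain ⟨p⟩ := h2
  have hx : x ∉ p.support := walk_avoids hT hdx p
  have h3 : (T.deleteEdges {s(x, c)}).Reachable z d := transfer_reach p hx c
  rw [Sym2.eq_swap] at h3
  have h4 : (T.deleteEdges {s(c, x)}).Adj d x := by
    rw [deleteEdges_adj]
    refine ⟨hdx, ?_⟩
    simp only [Set.mem_singleton_iff, Sym2.eq_iff]
    rintro (⟨rfl, -⟩ | ⟨rfl, rfl⟩)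
    · exact hcd rfl
    · exact hdx.ne rfl
  exact not_reach hT hcx ((h1.symm.trans h3).trans h4.reachable)

lemma decomp (hT : T.IsAcyclic) {x y c d : W} (hxy : T.Adj x y)
    (hnbr : T.neighborSet x = {y, c, d}) (hcy : c ≠ y) (hdy : d ≠ y) (z : W) :
    (T.deleteEdges {s(x, y)}).Reachable z x ↔
      z = x ∨ (T.deleteEdges {s(c, x)}).Reachable z c ∨
        (T.deleteEdges {s(d, x)}).Reachable z d := by
  have hcx : T.Adj c x := ((mem_neighborSet _ _ _).mp (by rw [hnbr]; simp)).symm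
  have hdx : T.Adj d x := ((mem_neighborSet _ _ _).mp (by rw [hnbr]; simp)).symm
  constructor
  · intro h
    classical
    by_cases hz : z = x
    · exact Or.inl hz
    obtain ⟨p0⟩ := h.symm
    obtain ⟨p, hp⟩ : ∃ q : (T.deleteEdges {s(x, y)}).Walk x z, q.IsPath :=
      ⟨p0.toPath.1, p0.toPath.2⟩
    cases p with
    | nil => exact absurd rfl hz
    | @cons _ u _ h q =>
      rw [Walk.cons_isPath_iff] at hp
      have hxs : x ∉ q.support := hp.2
      rw [deleteEdges_adj] at h
      have huy : u ≠ y := by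
        rintro rfl
        exact h.2 rfl
      have hu : u ∈ T.neighborSet x := (mem_neighborSet _ _ _).mpr h.1
      rw [hnbr] at hu
      simp only [Set.mem_insert_iff, Set.mem_singleton_iff] at hu
      have hxr : x ∉ q.reverse.support := by
        rw [Walk.support_reverse]; simpa using hxs
      rcases hu with rfl | rfl | rfl
      · exact absurd rfl huy
      · have := transfer_reach q.reverse hxr u
        rw [Sym2.eq_swap] at this
        exact Or.inr (Or.inl this)
      · have := transfer_reach q.reverse hxr u
        rw [Sym2.eq_swap] at this
        exact Or.inr (Or.inr this)
  · rintro (rfl | h | h)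
    · exact Reachable.rfl
    · exact reach_sub hT hxy hcx hcy h
    · exact reach_sub hT hxy hdx hdy h

lemma exists_leaf {V : Type*} [Finite W] (f : V → W) (hT : T.IsAcyclic)
    (hdeg : ∀ w : W, (T.neighborSet w).ncard = 1 ∨ (T.neighborSet w).ncard = 3)
    (hleaves : ∀ w : W, (T.neighborSet w).ncard = 1 ↔ w ∈ Set.range f) :
    ∀ (N : ℕ) {x y : W}, T.Adj x y →
      ({z | (T.deleteEdges {s(x, y)}).Reachable z x}).ncard ≤ N →
      ∃ v, (T.deleteEdges {s(x, y)}).Reachable (f v) x := by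
  intro N
  induction N with
  | zero =>
    intro x y hxy hcard
    exfalso
    have : 0 < ({z | (T.deleteEdges {s(x, y)}).Reachable z x}).ncard :=
      (Set.ncard_pos (Set.toFinite _)).mpr ⟨x, Reachable.rfl⟩
    omega
  | succ N ih =>
    intro x y hxy hcard
    rcases hdeg x with h1 | h3
    · obtain ⟨v, hv⟩ := (hleaves x).mp h1
      exact ⟨v, by rw [hv]⟩
    · have hy : y ∈ T.neighborSet x := (mem_neighborSet _ _ _).mpr hxy
      obtain ⟨c, d, hcd, hcy, hdy, hnbr⟩ := three_mem h3 hy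
      have hcx : T.Adj c x := ((mem_neighborSet _ _ _).mp (by rw [hnbr]; simp)).symm
      have hsub : {z | (T.deleteEdges {s(c, x)}).Reachable z c} ⊆
          {z | (T.deleteEdges {s(x, y)}).Reachable z x} :=
        fun z hz => reach_sub hT hxy hcx hcy hz
      have hxnot : x ∉ {z | (T.deleteEdges {s(c, x)}).Reachable z c} :=
        fun h => not_reach hT hcx h.symm
      have hlt : ({z | (T.deleteEdges {s(c, x)}).Reachable z c}).ncard <
          ({z | (T.deleteEdges {s(x, y)}).Reachable z x}).ncard :=
        Set.ncard_lt_ncard ⟨hsub, fun hts => hxnot (hts Reachable.rfl)⟩ (Set.toFinite _)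
      obtain ⟨v, hv⟩ := ih hcx (by omega)
      exact ⟨v, reach_sub hT hxy hcx hcy hv⟩


def sideSet {V : Type*} (T : SimpleGraph W) (f : V → W) (a b : W) : Set V :=
  {v | (T.deleteEdges {s(a, b)}).Reachable (f v) a}

lemma mem_sideSet {V : Type*} {f : V → W} {a b : W} {v : V} :
    v ∈ sideSet T f a b ↔ (T.deleteEdges {s(a, b)}).Reachable (f v) a := Iff.rfl

lemma sideSet_def' {V : Type*} (f : V → W) (a b : W) :
    sideSet T f b a = {v | (T.deleteEdges {s(a, b)}).Reachable (f v) b} := by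
  unfold sideSet
  rw [Sym2.eq_swap]

lemma side_union {V : Type*} (hc : T.Connected) (f : V → W) (a b : W) :
    sideSet T f a b ∪ sideSet T f b a = Set.univ := by
  rw [Set.eq_univ_iff_forall]
  intro v
  rcases reach_dichotomy hc a b (f v) with h | h
  · exact Or.inl h
  · refine Or.inr ?_
    rw [sideSet_def']
    exact h

lemma side_disj {V : Type*} (hacyc : T.IsAcyclic) (f : V → W) {a b : W} (hab : T.Adj a b) :
    sideSet T f a b ∩ sideSet T f b a = ∅ := by
  rw [Set.eq_empty_iff_forall_notMem]
  rintro v ⟨h1, h2⟩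
  rw [sideSet_def'] at h2
  exact not_reach hacyc hab ((mem_sideSet.mp h1).symm.trans h2)

lemma side_sum {V : Type*} [Fintype V] (hc : T.Connected) (hacyc : T.IsAcyclic)
    (f : V → W) {a b : W} (hab : T.Adj a b) :
    (sideSet T f a b).ncard + (sideSet T f b a).ncard = Fintype.card V := by
  rw [← Set.ncard_union_eq (Set.disjoint_iff_inter_eq_empty.mpr (side_disj hacyc f hab))
      (Set.toFinite _) (Set.toFinite _), side_union hc f a b, Set.ncard_univ,
    Nat.card_eq_fintype_card]

lemma side_pos {V : Type*} [Finite W] [Fintype V] (f : V → W) (hT : T.IsAcyclic)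
    (hdeg : ∀ w : W, (T.neighborSet w).ncard = 1 ∨ (T.neighborSet w).ncard = 3)
    (hleaves : ∀ w : W, (T.neighborSet w).ncard = 1 ↔ w ∈ Set.range f)
    {a b : W} (hab : T.Adj a b) : 0 < (sideSet T f a b).ncard := by
  obtain ⟨v, hv⟩ := exists_leaf f hT hdeg hleaves
    (({z | (T.deleteEdges {s(a, b)}).Reachable z a}).ncard) hab le_rfl
  exact (Set.ncard_pos (Set.toFinite _)).mpr ⟨v, hv⟩

lemma side_decomp {V : Type*} [Fintype V] (hacyc : T.IsAcyclic) (f : V → W)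
    {x y c d : W} (hxy : T.Adj x y) (hnbr : T.neighborSet x = {y, c, d})
    (hcd : c ≠ d) (hcy : c ≠ y) (hdy : d ≠ y) (hxnr : x ∉ Set.range f) :
    (sideSet T f x y).ncard = (sideSet T f c x).ncard + (sideSet T f d x).ncard := by
  have hcx : T.Adj c x := ((T.mem_neighborSet _ _).mp (by rw [hnbr]; simp)).symm
  have hdx : T.Adj d x := ((T.mem_neighborSet _ _).mp (by rw [hnbr]; simp)).symm
  have hset : sideSet T f x y = sideSet T f c x ∪ sideSet T f d x := by
    ext v
    rw [mem_sideSet, decomp hacyc hxy hnbr hcy hdy (f v)]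
    simp only [Set.mem_union, mem_sideSet]
    constructor
    · rintro (h | h | h)
      · exact absurd ⟨v, h⟩ hxnr
      · exact Or.inl h
      · exact Or.inr h
    · rintro (h | h)
      · exact Or.inr (Or.inl h)
      · exact Or.inr (Or.inr h)
  rw [hset, Set.ncard_union_eq (Set.disjoint_left.mpr
    (fun v h1 h2 => disj hacyc hcx hdx hcd (mem_sideSet.mp h1) (mem_sideSet.mp h2)))
    (Set.toFinite _) (Set.toFinite _)]

end Stmt2Aux


open Stmt2Aux

/-- Let `G` be a simple graph on a finite vertex set `V` with
`|V| = n` and let `r` be a natural number.  Suppose there is a finite tree `T` in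
which every vertex has degree 1 or 3, whose leaves are in bijection with `V`
(via an injection `f : V → W` whose range is exactly the set of leaves), such that
for every edge of `T` the biadjacency matrix over `ℤ/2` of the bipartition of `V`
induced by the two components of `T` minus that edge has rank at most `r`.  Then
there is a bipartition of `V` into sets `A` and `B` with `|A| ≥ n/3` and
`|B| ≥ n/3` whose biadjacency matrix over `ℤ/2` has rank at most `r`. -/
theorem stmt_2 {V : Type*} [Fintype V] (G : SimpleGraph V)
    (n : ℕ) (hn : n = Fintype.card V) (r : ℕ)
    (W : Type) (T : SimpleGraph W) (hW : Finite W)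
    (htree : T.IsTree)
    (hdeg : ∀ w : W, (T.neighborSet w).ncard = 1 ∨ (T.neighborSet w).ncard = 3)
    (f : V → W) (hinj : Function.Injective f)
    (hleaves : ∀ w : W, (T.neighborSet w).ncard = 1 ↔ w ∈ Set.range f)
    (hrank : ∀ a b : W, T.Adj a b →
      biadjRank G {v : V | (T.deleteEdges {s(a, b)}).Reachable (f v) a}
                  {v : V | (T.deleteEdges {s(a, b)}).Reachable (f v) b} ≤ r) :
    ∃ A B : Set V, A ∪ B = Set.univ ∧ A ∩ B = ∅ ∧
      (n : ℝ) / 3 ≤ (A.ncard : ℝ) ∧ (n : ℝ) / 3 ≤ (B.ncard : ℝ) ∧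
      biadjRank G A B ≤ r := by
  classical
  haveI := hW
  have hconn : T.Connected := htree.isConnected
  have hacyc : T.IsAcyclic := htree.IsAcyclic
  obtain ⟨w0⟩ := hconn.nonempty
  have hnb : (T.neighborSet w0).Nonempty := by
    rcases hdeg w0 with h | h <;>
      exact (Set.ncard_pos (Set.toFinite _)).mp (by omega)
  obtain ⟨b1, hb1⟩ := hnb
  have hadj0 : T.Adj w0 b1 := (T.mem_neighborSet _ _).mp hb1
  have key : ∀ a b : W, T.Adj a b →
      (sideSet T f b a).ncard ≤ (sideSet T f a b).ncard →
      (∀ p : W × W, T.Adj p.1 p.2 →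
        max (sideSet T f a b).ncard (sideSet T f b a).ncard ≤
          max (sideSet T f p.1 p.2).ncard (sideSet T f p.2 p.1).ncard) →
      ∃ A B : Set V, A ∪ B = Set.univ ∧ A ∩ B = ∅ ∧
        (n : ℝ) / 3 ≤ (A.ncard : ℝ) ∧ (n : ℝ) / 3 ≤ (B.ncard : ℝ) ∧
        biadjRank G A B ≤ r := by
    intro a b hab hle hmin
    have hsum := side_sum hconn hacyc f hab
    have hub : 3 * (sideSet T f a b).ncard ≤ 2 * n := by
      by_contra h'
      push_neg at h'
      rcases hdeg a with h1 | h3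
      · -- a is a leaf
        have hgab : (sideSet T f a b).ncard ≤ 1 := by
          obtain ⟨v0, hv0⟩ := (hleaves a).mp h1
          have hsubs : sideSet T f a b ⊆ {v0} := by
            intro v hv
            have hnbr1 : T.neighborSet a = {b} := by
              obtain ⟨y0, hy0⟩ := Set.ncard_eq_one.mp h1
              have hbmem : b ∈ T.neighborSet a := (T.mem_neighborSet _ _).mpr hab
              rw [hy0] at hbmem ⊢
              rw [Set.mem_singleton_iff] at hbmem
              rw [hbmem]
            have hfa : f v = a := leaf_comp hnbr1 (mem_sideSet.mp hv)
            have : f v = f v0 := by rw [hfa, hv0]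
            exact hinj this
          calc (sideSet T f a b).ncard ≤ ({v0} : Set V).ncard :=
                Set.ncard_le_ncard hsubs (Set.toFinite _)
            _ = 1 := Set.ncard_singleton _
        have hgba := side_pos f hacyc hdeg hleaves hab.symm
        omega
      · -- a has degree 3
        have hb' : b ∈ T.neighborSet a := (T.mem_neighborSet _ _).mpr hab
        obtain ⟨c, d, hcd, hcb, hdb, hnbr⟩ := three_mem h3 hb'
        have hca : T.Adj c a := ((T.mem_neighborSet _ _).mp (by rw [hnbr]; simp)).symm
        have hda : T.Adj d a := ((T.mem_neighborSet _ _).mp (by rw [hnbr]; simp)).symm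
        have hxnr : a ∉ Set.range f := fun hr => by
          have := (hleaves a).mpr hr; omega
        have hdecomp := side_decomp hacyc f hab hnbr hcd hcb hdb hxnr
        have hcpos := side_pos f hacyc hdeg hleaves hca
        have hdpos := side_pos f hacyc hdeg hleaves hda
        have inner : ∀ c' d' : W, T.Adj c' a →
            (sideSet T f a b).ncard = (sideSet T f c' a).ncard + (sideSet T f d' a).ncard →
            1 ≤ (sideSet T f d' a).ncard →
            (sideSet T f d' a).ncard ≤ (sideSet T f c' a).ncard → False := by
          intro c' d' hc'a hdec hd1 hdc
          have hsum' := side_sum hconn hacyc f hc'a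
          have hmax := hmin (c', a) hc'a
          rw [max_eq_left hle] at hmax
          have h5 : (sideSet T f c' a).ncard < (sideSet T f a b).ncard := by omega
          have h6 : (sideSet T f a c').ncard < (sideSet T f a b).ncard := by omega
          exact absurd hmax (not_le.mpr (max_lt h5 h6))
        rcases le_total ((sideSet T f d a).ncard) ((sideSet T f c a).ncard) with hh | hh
        · exact inner c d hca hdecomp hdpos hh
        · exact inner d c hda (by omega) hcpos hh
    refine ⟨sideSet T f a b, sideSet T f b a, side_union hconn f a b,
      side_disj hacyc f hab, ?_, ?_, ?_⟩
    · rw [div_le_iff₀ (by norm_num : (0 : ℝ) < 3)]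
      exact_mod_cast (by omega : n ≤ (sideSet T f a b).ncard * 3)
    · rw [div_le_iff₀ (by norm_num : (0 : ℝ) < 3)]
      exact_mod_cast (by omega : n ≤ (sideSet T f b a).ncard * 3)
    · rw [sideSet_def' f a b]
      exact hrank a b hab
  obtain ⟨⟨a0, b0⟩, hp0, hmin'⟩ := Set.exists_min_image {p : W × W | T.Adj p.1 p.2}
    (fun p => max ((sideSet T f p.1 p.2).ncard) ((sideSet T f p.2 p.1).ncard))
    (Set.toFinite _) ⟨(w0, b1), hadj0⟩
  rcases le_total ((sideSet T f b0 a0).ncard) ((sideSet T f a0 b0).ncard) with h | h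
  · exact key a0 b0 hp0 h (fun p hp => hmin' p hp)
  · refine key b0 a0 hp0.symm h (fun p hp => ?_)
    rw [max_comm]
    exact hmin' p hp
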